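/- Every double-critical 8-chromatic graph that contains a vertex of degree 9 contains, as a subgraph, the complete graph on 6 vertices with one edge removed. -/

import Mathlib

/-- A connected graph `G` with chromatic number `k` is *double-critical* if for every
edge `uv` of `G`, deleting both `u` and `v` yields a graph that is `(k-2)`-colourable. -/
def SimpleGraph.DoubleCritical {V : Type*} (G : SimpleGraph V) (k : ℕ) : Prop :=
  G.Connected ∧ G.chromaticNumber = k ∧
    ∀ u v : V, G.Adj u v →
      (G.induce ({u, v}ᶜ : Set V)).chromaticNumber ≤ (k - 2 : ℕ)

/-- The complete graph on 6 vertices with one edge removed. -/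
def K6minus : SimpleGraph (Fin 6) :=
  (⊤ : SimpleGraph (Fin 6)).deleteEdges {s((0 : Fin 6), (1 : Fin 6))}


/-- If every colour appears... rainbow lemma: for an 8-chromatic graph `G`, an edge `xy`,
and a map `c` that is a proper 6-colouring outside `{x,y}`, every colour occurs on a
common neighbour of `x` and `y`. -/
lemma my_rainbow {V : Type*} (G : SimpleGraph V)
    (h8 : G.chromaticNumber = 8) {x y : V} (hxy : G.Adj x y)
    (c : V → Fin 6)
    (hc : ∀ a b : V, a ≠ x → a ≠ y → b ≠ x → b ≠ y → G.Adj a b → c a ≠ c b)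
    (i : Fin 6) :
    ∃ z, G.Adj x z ∧ G.Adj y z ∧ c z = i := by
  classical
  by_contra h
  push_neg at h
  set C : V → Fin 7 := fun v =>
    if v = x then 6 else if v = y then i.castSucc
    else if G.Adj y v ∧ c v = i then 6 else (c v).castSucc with hC
  have hCx : C x = 6 := by simp [hC]
  have hCy : C y = i.castSucc := by simp [hC, hxy.ne']
  have hCo : ∀ v, v ≠ x → v ≠ y →
      (C v = 6 ∧ G.Adj y v ∧ c v = i) ∨ (C v = (c v).castSucc ∧ ¬(G.Adj y v ∧ c v = i)) := by
    intro v hvx hvy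
    by_cases hv : G.Adj y v ∧ c v = i
    · left; refine ⟨?_, hv⟩; simp [hC, hvx, hvy, hv]
    · right; refine ⟨?_, hv⟩; simp [hC, hvx, hvy, hv]
  have hcs : ∀ j : Fin 6, j.castSucc ≠ (6 : Fin 7) := by decide
  have hvalid : ∀ {a b : V}, G.Adj a b → C a ≠ C b := by
    intro a b hab heq
    by_cases hax : a = x
    · subst hax
      by_cases hby : b = y
      · subst hby; rw [hCx, hCy] at heq; exact hcs i heq.symm
      · rcases hCo b hab.ne' hby with ⟨hb1, hb2, hb3⟩ | ⟨hb1, hb2⟩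
        · exact h b hab hb2 hb3
        · rw [hCx, hb1] at heq; exact hcs _ heq.symm
    · by_cases hay : a = y
      · subst hay
        by_cases hbx : b = x
        · subst hbx; rw [hCx, hCy] at heq; exact hcs i heq
        · rcases hCo b hbx hab.ne' with ⟨hb1, hb2, hb3⟩ | ⟨hb1, hb2⟩
          · rw [hCy, hb1] at heq; exact hcs i heq
          · rw [hCy, hb1] at heq
            exact hb2 ⟨hab, (Fin.castSucc_inj.mp heq).symm⟩
      · by_cases hbx : b = x
        · subst hbx
          rcases hCo a hax hay with ⟨ha1, ha2, ha3⟩ | ⟨ha1, ha2⟩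
          · exact h a hab.symm ha2 ha3
          · rw [hCx, ha1] at heq; exact hcs _ heq
        · by_cases hby : b = y
          · subst hby
            rcases hCo a hax hay with ⟨ha1, ha2, ha3⟩ | ⟨ha1, ha2⟩
            · rw [hCy, ha1] at heq; exact hcs i heq.symm
            · rw [hCy, ha1] at heq
              exact ha2 ⟨hab.symm, Fin.castSucc_inj.mp heq⟩
          · rcases hCo a hax hay with ⟨ha1, ha2, ha3⟩ | ⟨ha1, ha2⟩ <;>
              rcases hCo b hbx hby with ⟨hb1, hb2, hb3⟩ | ⟨hb1, hb2⟩
            · exact hc a b hax hay hbx hby hab (by rw [ha3, hb3])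
            · rw [ha1, hb1] at heq; exact hcs _ heq.symm
            · rw [ha1, hb1] at heq; exact hcs _ heq
            · rw [ha1, hb1] at heq
              exact hc a b hax hay hbx hby hab (Fin.castSucc_inj.mp heq)
  have : G.Colorable 7 := ⟨SimpleGraph.Coloring.mk C fun hab => hvalid hab⟩
  have h7 := this.chromaticNumber_le
  rw [h8] at h7
  norm_num at h7


lemma my_pair {V : Type*} [DecidableEq V] (R : V → V → Prop) [DecidableRel R]
    (S : Finset V) (hdeg : ∀ v ∈ S, (S.filter (R v)).card ≤ 2) (h4 : 4 ≤ S.card) :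
    ∃ a ∈ S, ∃ b ∈ S, a ≠ b ∧ ¬ R a b := by
  obtain ⟨a, ha⟩ := Finset.card_pos.mp (show 0 < S.card by omega)
  have hT : 1 ≤ (S \ insert a (S.filter (R a))).card := by
    have h1 := Finset.card_le_card_sdiff_add_card (s := S) (t := insert a (S.filter (R a)))
    have h2 : (insert a (S.filter (R a))).card ≤ 3 := by
      have := Finset.card_insert_le a (S.filter (R a))
      have := hdeg a ha
      omega
    omega
  obtain ⟨b, hb⟩ := Finset.card_pos.mp hT
  rw [Finset.mem_sdiff, Finset.mem_insert] at hb
  push_neg at hb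
  refine ⟨a, ha, b, hb.1, fun hba => hb.2.1 hba.symm, fun hR => hb.2.2 ?_⟩
  exact Finset.mem_filter.mpr ⟨hb.1, hR⟩

lemma my_triple {V : Type*} [DecidableEq V] (R : V → V → Prop) [DecidableRel R]
    (hsym : Symmetric R) (S : Finset V)
    (hdeg : ∀ v ∈ S, (S.filter (R v)).card ≤ 2)
    (htri : ∀ a ∈ S, ∀ b ∈ S, ∀ c ∈ S, R a b → R b c → R a c → False)
    (h7 : 7 ≤ S.card) :
    ∃ a ∈ S, ∃ b ∈ S, ∃ c ∈ S,
      a ≠ b ∧ a ≠ c ∧ b ≠ c ∧ ¬R a b ∧ ¬R a c ∧ ¬R b c := by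
  obtain ⟨v, hv⟩ := Finset.card_pos.mp (show 0 < S.card by omega)
  by_cases hN : 2 ≤ (S.filter (R v)).card
  · obtain ⟨a, haf, b, hbf, hab⟩ := Finset.one_lt_card.mp (show 1 < (S.filter (R v)).card by omega)
    have haS := (Finset.mem_filter.mp haf).1
    have hbS := (Finset.mem_filter.mp hbf).1
    have hRva := (Finset.mem_filter.mp haf).2
    have hRvb := (Finset.mem_filter.mp hbf).2
    have hRab : ¬ R a b := fun hR => htri a haS v hv b hbS (hsym hRva) hRvb hR
    -- third vertex
    set U : Finset V := insert a (insert b (S.filter (R a) ∪ S.filter (R b))) with hU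
    have hUcard : U.card ≤ 6 := by
      rw [hU]
      have h1 := Finset.card_insert_le a (insert b (S.filter (R a) ∪ S.filter (R b)))
      have h2 := Finset.card_insert_le b (S.filter (R a) ∪ S.filter (R b))
      have h3 := Finset.card_union_le (S.filter (R a)) (S.filter (R b))
      have := hdeg a haS
      have := hdeg b hbS
      omega
    have hT : 1 ≤ (S \ U).card := by
      have := Finset.card_le_card_sdiff_add_card (s := S) (t := U)
      omega
    obtain ⟨w, hw⟩ := Finset.card_pos.mp hT
    rw [Finset.mem_sdiff] at hw
    have hwS := hw.1
    have hwU := hw.2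
    simp only [hU, Finset.mem_insert, Finset.mem_union, Finset.mem_filter] at hwU
    push_neg at hwU
    refine ⟨a, haS, b, hbS, w, hwS, hab, ?_, ?_, hRab, ?_, ?_⟩
    · exact fun h => hwU.1 h.symm
    · exact fun h => hwU.2.1 h.symm
    · exact fun hR => hwU.2.2.1 hwS hR
    · exact fun hR => hwU.2.2.2 hwS hR
  · -- v has at most one R-neighbour
    have hT : 4 ≤ (S \ insert v (S.filter (R v))).card := by
      have h1 := Finset.card_le_card_sdiff_add_card (s := S) (t := insert v (S.filter (R v)))
      have h2 := Finset.card_insert_le v (S.filter (R v))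
      omega
    set T := S \ insert v (S.filter (R v)) with hTdef
    have hTS : T ⊆ S := Finset.sdiff_subset
    obtain ⟨a, haT, b, hbT, hab, hRab⟩ :=
      my_pair R T (fun u hu => le_trans (Finset.card_le_card
        (Finset.filter_subset_filter _ hTS)) (hdeg u (hTS hu))) hT
    have haS := hTS haT
    have hbS := hTS hbT
    have hma : a ∉ insert v (S.filter (R v)) := (Finset.mem_sdiff.mp haT).2
    have hmb : b ∉ insert v (S.filter (R v)) := (Finset.mem_sdiff.mp hbT).2
    simp only [Finset.mem_insert, Finset.mem_filter] at hma hmb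
    push_neg at hma hmb
    refine ⟨v, hv, a, haS, b, hbS, fun h => hma.1 h.symm, fun h => hmb.1 h.symm, hab,
      fun hR => hma.2 haS hR, fun hR => hmb.2 hbS hR, hRab⟩

lemma my_quad {V : Type*} [DecidableEq V] (R : V → V → Prop) [DecidableRel R]
    (hsym : Symmetric R) (S : Finset V)
    (hdeg : ∀ v ∈ S, (S.filter (R v)).card ≤ 2)
    (htri : ∀ a ∈ S, ∀ b ∈ S, ∀ c ∈ S, R a b → R b c → R a c → False)
    (h9 : 9 ≤ S.card) :
    ∃ a ∈ S, ∃ b ∈ S, ∃ c ∈ S, ∃ d ∈ S,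
      a ≠ b ∧ a ≠ c ∧ a ≠ d ∧ b ≠ c ∧ b ≠ d ∧ c ≠ d ∧
      ¬R a b ∧ ¬R a c ∧ ¬R a d ∧ ¬R b c ∧ ¬R b d ∧ ¬R c d := by
  obtain ⟨v, hv⟩ := Finset.card_pos.mp (show 0 < S.card by omega)
  by_cases hN : 2 ≤ (S.filter (R v)).card
  · obtain ⟨a, haf, b, hbf, hab⟩ := Finset.one_lt_card.mp (show 1 < (S.filter (R v)).card by omega)
    have haS := (Finset.mem_filter.mp haf).1
    have hbS := (Finset.mem_filter.mp hbf).1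
    have hRva := (Finset.mem_filter.mp haf).2
    have hRvb := (Finset.mem_filter.mp hbf).2
    have hRab : ¬ R a b := fun hR => htri a haS v hv b hbS (hsym hRva) hRvb hR
    have hvfa : v ∈ S.filter (R a) := Finset.mem_filter.mpr ⟨hv, hsym hRva⟩
    have hvfb : v ∈ S.filter (R b) := Finset.mem_filter.mpr ⟨hv, hsym hRvb⟩
    set U : Finset V := insert v (insert a (insert b
      ((S.filter (R a)).erase v ∪ (S.filter (R b)).erase v))) with hU
    have hUcard : U.card ≤ 5 := by
      rw [hU]
      have h1 := Finset.card_insert_le v (insert a (insert b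
        ((S.filter (R a)).erase v ∪ (S.filter (R b)).erase v)))
      have h2 := Finset.card_insert_le a (insert b
        ((S.filter (R a)).erase v ∪ (S.filter (R b)).erase v))
      have h3 := Finset.card_insert_le b
        ((S.filter (R a)).erase v ∪ (S.filter (R b)).erase v)
      have h4 := Finset.card_union_le ((S.filter (R a)).erase v) ((S.filter (R b)).erase v)
      have h5 := Finset.card_erase_of_mem hvfa
      have h6 := Finset.card_erase_of_mem hvfb
      have := hdeg a haS
      have := hdeg b hbS
      omega
    have hT : 4 ≤ (S \ U).card := by
      have := Finset.card_le_card_sdiff_add_card (s := S) (t := U)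
      omega
    set T := S \ U with hTdef
    have hTS : T ⊆ S := Finset.sdiff_subset
    obtain ⟨c, hcT, d, hdT, hcd, hRcd⟩ :=
      my_pair R T (fun u hu => le_trans (Finset.card_le_card
        (Finset.filter_subset_filter _ hTS)) (hdeg u (hTS hu))) hT
    have hcS := hTS hcT
    have hdS := hTS hdT
    have hnotU : ∀ w ∈ T, w ≠ v ∧ w ≠ a ∧ w ≠ b ∧ ¬ R a w ∧ ¬ R b w := by
      intro w hw
      have hwU := (Finset.mem_sdiff.mp hw).2
      have hwS := (Finset.mem_sdiff.mp hw).1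
      simp only [hU, Finset.mem_insert, Finset.mem_union, Finset.mem_erase,
        Finset.mem_filter] at hwU
      push_neg at hwU
      refine ⟨hwU.1, hwU.2.1, hwU.2.2.1, ?_, ?_⟩
      · exact fun hR => hwU.2.2.2.1 hwU.1 hwS hR
      · exact fun hR => hwU.2.2.2.2 hwU.1 hwS hR
    obtain ⟨_, hca, hcb, hRac, hRbc⟩ := hnotU c hcT
    obtain ⟨_, hda, hdb, hRad, hRbd⟩ := hnotU d hdT
    exact ⟨a, haS, b, hbS, c, hcS, d, hdS, hab, fun h => hca h.symm, fun h => hda h.symm,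
      fun h => hcb h.symm, fun h => hdb h.symm, hcd, hRab, hRac, hRad, hRbc, hRbd, hRcd⟩
  · have hT : 7 ≤ (S \ insert v (S.filter (R v))).card := by
      have h1 := Finset.card_le_card_sdiff_add_card (s := S) (t := insert v (S.filter (R v)))
      have h2 := Finset.card_insert_le v (S.filter (R v))
      omega
    set T := S \ insert v (S.filter (R v)) with hTdef
    have hTS : T ⊆ S := Finset.sdiff_subset
    obtain ⟨a, haT, b, hbT, c, hcT, hab, hac, hbc, hRab, hRac, hRbc⟩ :=
      my_triple R hsym T (fun u hu => le_trans (Finset.card_le_card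
        (Finset.filter_subset_filter _ hTS)) (hdeg u (hTS hu)))
        (fun a ha b hb c hc => htri a (hTS ha) b (hTS hb) c (hTS hc)) hT
    have hnot : ∀ w ∈ T, w ≠ v ∧ ¬ R v w := by
      intro w hw
      have hwU := (Finset.mem_sdiff.mp hw).2
      have hwS := (Finset.mem_sdiff.mp hw).1
      simp only [Finset.mem_insert, Finset.mem_filter] at hwU
      push_neg at hwU
      exact ⟨hwU.1, fun hR => hwU.2 hwS hR⟩
    obtain ⟨hav, hRva⟩ := hnot a haT
    obtain ⟨hbv, hRvb⟩ := hnot b hbT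
    obtain ⟨hcv, hRvc⟩ := hnot c hcT
    exact ⟨v, hv, a, hTS haT, b, hTS hbT, c, hTS hcT, fun h => hav h.symm,
      fun h => hbv h.symm, fun h => hcv h.symm, hab, hac, hbc, hRva, hRvb, hRvc,
      hRab, hRac, hRbc⟩

lemma my_fifth {V : Type*} [DecidableEq V] (R : V → V → Prop) [DecidableRel R]
    (hsym : Symmetric R) (M Q : Finset V) (hQM : Q ⊆ M)
    (hdeg : ∀ v ∈ M, (M.filter (R v)).card ≤ 2)
    (hM : M.card = 9) (hQ : Q.card = 4) :
    ∃ z ∈ M \ Q, (Q.filter (R z)).card ≤ 1 := by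
  by_contra h
  push_neg at h
  set W := M \ Q with hW
  have hWcard : W.card = 5 := by
    rw [hW, Finset.card_sdiff_of_subset hQM, hM, hQ]
  have hsum : 10 ≤ ∑ z ∈ W, (Q.filter (R z)).card := by
    calc 10 = ∑ _z ∈ W, 2 := by rw [Finset.sum_const, hWcard]; ring
    _ ≤ ∑ z ∈ W, (Q.filter (R z)).card := Finset.sum_le_sum (fun z hz => h z hz)
  have hswap : ∑ z ∈ W, (Q.filter (R z)).card = ∑ q ∈ Q, (W.filter (R q)).card := by
    simp only [Finset.card_filter]
    rw [Finset.sum_comm]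
    congr 1
    ext q
    congr 1
    ext z
    congr 1
    exact propext ⟨fun h => hsym h, fun h => hsym h⟩
  have hbound : ∑ q ∈ Q, (W.filter (R q)).card ≤ 8 := by
    calc ∑ q ∈ Q, (W.filter (R q)).card ≤ ∑ q ∈ Q, 2 := by
          refine Finset.sum_le_sum (fun q hq => ?_)
          refine le_trans (Finset.card_le_card ?_) (hdeg q (hQM hq))
          exact Finset.filter_subset_filter _ (Finset.sdiff_subset)
    _ = 8 := by rw [Finset.sum_const, hQ]; ring
  omega

lemma my_assemble {V : Type*} (G : SimpleGraph V) {x z qb p1 p2 p3 : V}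
    (hzqb : z ≠ qb)
    (hxz : G.Adj x z) (hxqb : G.Adj x qb) (hxp1 : G.Adj x p1) (hxp2 : G.Adj x p2)
    (hxp3 : G.Adj x p3)
    (hzp1 : G.Adj z p1) (hzp2 : G.Adj z p2) (hzp3 : G.Adj z p3)
    (hqp1 : G.Adj qb p1) (hqp2 : G.Adj qb p2) (hqp3 : G.Adj qb p3)
    (hp12 : G.Adj p1 p2) (hp13 : G.Adj p1 p3) (hp23 : G.Adj p2 p3) :
    ∃ f : Fin 6 ↪ V, ∀ i j : Fin 6, K6minus.Adj i j → G.Adj (f i) (f j) := by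
  have hzx : z ≠ x := hxz.ne'
  have hqx : qb ≠ x := hxqb.ne'
  have hxp1' : x ≠ p1 := hxp1.ne
  have hxp2' : x ≠ p2 := hxp2.ne
  have hxp3' : x ≠ p3 := hxp3.ne
  have hzp1' : z ≠ p1 := hzp1.ne
  have hzp2' : z ≠ p2 := hzp2.ne
  have hzp3' : z ≠ p3 := hzp3.ne
  have hqp1' : qb ≠ p1 := hqp1.ne
  have hqp2' : qb ≠ p2 := hqp2.ne
  have hqp3' : qb ≠ p3 := hqp3.ne
  have hp12' : p1 ≠ p2 := hp12.ne
  have hp13' : p1 ≠ p3 := hp13.ne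
  have hp23' : p2 ≠ p3 := hp23.ne
  refine ⟨⟨fun i => if i.val = 0 then z else if i.val = 1 then qb else if i.val = 2 then x
    else if i.val = 3 then p1 else if i.val = 4 then p2 else p3, ?_⟩, ?_⟩
  · intro i j hij
    match i, j, hij with
    | ⟨0,_⟩, ⟨0,_⟩, h => exact rfl
    | ⟨0,_⟩, ⟨1,_⟩, h => exact absurd h hzqb
    | ⟨0,_⟩, ⟨2,_⟩, h => exact absurd h hzx
    | ⟨0,_⟩, ⟨3,_⟩, h => exact absurd h hzp1'
    | ⟨0,_⟩, ⟨4,_⟩, h => exact absurd h hzp2'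
    | ⟨0,_⟩, ⟨5,_⟩, h => exact absurd h hzp3'
    | ⟨1,_⟩, ⟨0,_⟩, h => exact absurd h.symm hzqb
    | ⟨1,_⟩, ⟨1,_⟩, h => exact rfl
    | ⟨1,_⟩, ⟨2,_⟩, h => exact absurd h hqx
    | ⟨1,_⟩, ⟨3,_⟩, h => exact absurd h hqp1'
    | ⟨1,_⟩, ⟨4,_⟩, h => exact absurd h hqp2'
    | ⟨1,_⟩, ⟨5,_⟩, h => exact absurd h hqp3'
    | ⟨2,_⟩, ⟨0,_⟩, h => exact absurd h.symm hzx
    | ⟨2,_⟩, ⟨1,_⟩, h => exact absurd h.symm hqx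
    | ⟨2,_⟩, ⟨2,_⟩, h => exact rfl
    | ⟨2,_⟩, ⟨3,_⟩, h => exact absurd h hxp1'
    | ⟨2,_⟩, ⟨4,_⟩, h => exact absurd h hxp2'
    | ⟨2,_⟩, ⟨5,_⟩, h => exact absurd h hxp3'
    | ⟨3,_⟩, ⟨0,_⟩, h => exact absurd h.symm hzp1'
    | ⟨3,_⟩, ⟨1,_⟩, h => exact absurd h.symm hqp1'
    | ⟨3,_⟩, ⟨2,_⟩, h => exact absurd h.symm hxp1'
    | ⟨3,_⟩, ⟨3,_⟩, h => exact rfl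
    | ⟨3,_⟩, ⟨4,_⟩, h => exact absurd h hp12'
    | ⟨3,_⟩, ⟨5,_⟩, h => exact absurd h hp13'
    | ⟨4,_⟩, ⟨0,_⟩, h => exact absurd h.symm hzp2'
    | ⟨4,_⟩, ⟨1,_⟩, h => exact absurd h.symm hqp2'
    | ⟨4,_⟩, ⟨2,_⟩, h => exact absurd h.symm hxp2'
    | ⟨4,_⟩, ⟨3,_⟩, h => exact absurd h.symm hp12'
    | ⟨4,_⟩, ⟨4,_⟩, h => exact rfl
    | ⟨4,_⟩, ⟨5,_⟩, h => exact absurd h hp23'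
    | ⟨5,_⟩, ⟨0,_⟩, h => exact absurd h.symm hzp3'
    | ⟨5,_⟩, ⟨1,_⟩, h => exact absurd h.symm hqp3'
    | ⟨5,_⟩, ⟨2,_⟩, h => exact absurd h.symm hxp3'
    | ⟨5,_⟩, ⟨3,_⟩, h => exact absurd h.symm hp13'
    | ⟨5,_⟩, ⟨4,_⟩, h => exact absurd h.symm hp23'
    | ⟨5,_⟩, ⟨5,_⟩, h => exact rfl
  · intro i j hij
    simp only [K6minus, SimpleGraph.deleteEdges_adj, SimpleGraph.top_adj,
      Set.mem_singleton_iff] at hij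
    match i, j, hij with
    | ⟨0,_⟩, ⟨0,_⟩, h => exact absurd rfl h.1
    | ⟨0,_⟩, ⟨1,_⟩, h => exact absurd rfl h.2
    | ⟨0,_⟩, ⟨2,_⟩, h => exact hxz.symm
    | ⟨0,_⟩, ⟨3,_⟩, h => exact hzp1
    | ⟨0,_⟩, ⟨4,_⟩, h => exact hzp2
    | ⟨0,_⟩, ⟨5,_⟩, h => exact hzp3
    | ⟨1,_⟩, ⟨0,_⟩, h => exact absurd Sym2.eq_swap h.2
    | ⟨1,_⟩, ⟨1,_⟩, h => exact absurd rfl h.1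
    | ⟨1,_⟩, ⟨2,_⟩, h => exact hxqb.symm
    | ⟨1,_⟩, ⟨3,_⟩, h => exact hqp1
    | ⟨1,_⟩, ⟨4,_⟩, h => exact hqp2
    | ⟨1,_⟩, ⟨5,_⟩, h => exact hqp3
    | ⟨2,_⟩, ⟨0,_⟩, h => exact hxz
    | ⟨2,_⟩, ⟨1,_⟩, h => exact hxqb
    | ⟨2,_⟩, ⟨2,_⟩, h => exact absurd rfl h.1
    | ⟨2,_⟩, ⟨3,_⟩, h => exact hxp1
    | ⟨2,_⟩, ⟨4,_⟩, h => exact hxp2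
    | ⟨2,_⟩, ⟨5,_⟩, h => exact hxp3
    | ⟨3,_⟩, ⟨0,_⟩, h => exact hzp1.symm
    | ⟨3,_⟩, ⟨1,_⟩, h => exact hqp1.symm
    | ⟨3,_⟩, ⟨2,_⟩, h => exact hxp1.symm
    | ⟨3,_⟩, ⟨3,_⟩, h => exact absurd rfl h.1
    | ⟨3,_⟩, ⟨4,_⟩, h => exact hp12
    | ⟨3,_⟩, ⟨5,_⟩, h => exact hp13
    | ⟨4,_⟩, ⟨0,_⟩, h => exact hzp2.symm
    | ⟨4,_⟩, ⟨1,_⟩, h => exact hqp2.symm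
    | ⟨4,_⟩, ⟨2,_⟩, h => exact hxp2.symm
    | ⟨4,_⟩, ⟨3,_⟩, h => exact hp12.symm
    | ⟨4,_⟩, ⟨4,_⟩, h => exact absurd rfl h.1
    | ⟨4,_⟩, ⟨5,_⟩, h => exact hp23
    | ⟨5,_⟩, ⟨0,_⟩, h => exact hzp3.symm
    | ⟨5,_⟩, ⟨1,_⟩, h => exact hqp3.symm
    | ⟨5,_⟩, ⟨2,_⟩, h => exact hxp3.symm
    | ⟨5,_⟩, ⟨3,_⟩, h => exact hp13.symm
    | ⟨5,_⟩, ⟨4,_⟩, h => exact hp23.symm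
    | ⟨5,_⟩, ⟨5,_⟩, h => exact absurd rfl h.1

/-- Every double-critical 8-chromatic graph with a vertex of degree 9 contains `K₆⁻`
as a subgraph. -/
theorem double_critical_eight_chromatic_degree_nine_contains_K6minus_subgraph
    {V : Type*} [Fintype V] (G : SimpleGraph V) [DecidableRel G.Adj]
    (hG : G.DoubleCritical 8) (x : V) (hx : G.degree x = 9) :
    ∃ f : Fin 6 ↪ V, ∀ i j : Fin 6, K6minus.Adj i j → G.Adj (f i) (f j) := by
  classical
  obtain ⟨hconn, h8, hdc⟩ := hG
  set M := G.neighborFinset x with hMdef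
  have hM9 : M.card = 9 := by rw [hMdef, G.card_neighborFinset_eq_degree, hx]
  have hmemM : ∀ y, y ∈ M ↔ G.Adj x y := fun y => by
    rw [hMdef, SimpleGraph.mem_neighborFinset]
  have hxM : x ∉ M := fun h => G.loopless.irrefl x ((hmemM x).mp h)
  set R : V → V → Prop := fun u v => u ≠ v ∧ ¬ G.Adj u v with hRdef
  have hsym : Symmetric R := fun u v h => ⟨h.1.symm, fun ha => h.2 ha.symm⟩
  have hAdjOf : ∀ u v : V, u ≠ v → ¬ R u v → G.Adj u v := by
    intro u v h hn
    by_contra hA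
    exact hn ⟨h, hA⟩
  -- extract extended colorings of G - x - y
  have hcol : ∀ y, G.Adj x y → ∃ c : V → Fin 6,
      ∀ a b : V, a ≠ x → a ≠ y → b ≠ x → b ≠ y → G.Adj a b → c a ≠ c b := by
    intro y hxy
    have h6 := hdc x y hxy
    have hc : (G.induce ({x, y}ᶜ : Set V)).Colorable 6 := by
      rw [← SimpleGraph.chromaticNumber_le_iff_colorable]
      exact_mod_cast h6
    obtain ⟨c0⟩ := hc
    refine ⟨fun v => if h : v ∈ ({x, y}ᶜ : Set V) then c0 ⟨v, h⟩ else 0, ?_⟩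
    intro a b hax hay hbx hby hab
    have ha : a ∈ ({x, y}ᶜ : Set V) := by simp [hax, hay]
    have hb : b ∈ ({x, y}ᶜ : Set V) := by simp [hbx, hby]
    simp only [dif_pos ha, dif_pos hb]
    exact c0.valid (by simpa using hab)
  -- max "non-degree" 2 within M
  have hdeg : ∀ y ∈ M, (M.filter (R y)).card ≤ 2 := by
    intro y hyM
    have hxy : G.Adj x y := (hmemM y).mp hyM
    obtain ⟨c, hc⟩ := hcol y hxy
    have hrb := fun i => my_rainbow G h8 hxy c hc i
    choose zf hz1 hz2 hz3 using hrb
    have hzinj : Function.Injective zf := by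
      intro i j hij
      rw [← hz3 i, ← hz3 j, hij]
    have hsub : Finset.univ.image zf ⊆ M.filter (fun u => G.Adj y u) := by
      intro u hu
      simp only [Finset.mem_image] at hu
      obtain ⟨i, _, rfl⟩ := hu
      exact Finset.mem_filter.mpr ⟨(hmemM _).mpr (hz1 i), hz2 i⟩
    have h6le : 6 ≤ (M.filter (fun u => G.Adj y u)).card := by
      have := Finset.card_le_card hsub
      rwa [Finset.card_image_of_injective _ hzinj, Finset.card_univ,
        Fintype.card_fin] at this
    have hysub : insert y (M.filter (fun u => G.Adj y u)) ⊆ M :=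
      Finset.insert_subset hyM (Finset.filter_subset _ _)
    have hynotmem : y ∉ M.filter (fun u => G.Adj y u) := by
      simp [G.loopless.irrefl y]
    have hDsub : M.filter (R y) ⊆ M \ insert y (M.filter (fun u => G.Adj y u)) := by
      intro d hd
      obtain ⟨hdM, hdy, hnadj⟩ := Finset.mem_filter.mp hd
      refine Finset.mem_sdiff.mpr ⟨hdM, ?_⟩
      simp only [Finset.mem_insert, Finset.mem_filter]
      push_neg
      exact ⟨fun h => hdy h.symm, fun _ h => hnadj h⟩
    have hle := Finset.card_le_card hDsub
    rw [Finset.card_sdiff_of_subset hysub, Finset.card_insert_of_notMem hynotmem, hM9] at hle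
    omega
  -- no R-triangles within M
  have htri : ∀ a ∈ M, ∀ b ∈ M, ∀ d ∈ M, R a b → R b d → R a d → False := by
    intro a haM b hbM d hdM hRab hRbd hRad
    have hxa : G.Adj x a := (hmemM a).mp haM
    obtain ⟨c, hc⟩ := hcol a hxa
    have hrb := fun i => my_rainbow G h8 hxa c hc i
    choose zf hz1 hz2 hz3 using hrb
    have hsubad : ({a, d} : Finset V) ⊆ M.filter (R b) := by
      intro u hu
      rcases Finset.mem_insert.mp hu with rfl | hu
      · exact Finset.mem_filter.mpr ⟨haM, hsym hRab⟩
      · rw [Finset.mem_singleton] at hu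
        subst hu
        exact Finset.mem_filter.mpr ⟨hdM, hRbd⟩
    have hcard2 : ({a, d} : Finset V).card = 2 := by
      rw [Finset.card_insert_of_notMem (by simp [hRad.1]), Finset.card_singleton]
    have hEq : ({a, d} : Finset V) = M.filter (R b) :=
      Finset.eq_of_subset_of_card_le hsubad (by rw [hcard2]; exact hdeg b hbM)
    set j := c b with hj
    have hadjz : G.Adj a (zf j) := hz2 j
    have hza : zf j ≠ a := fun h => G.loopless.irrefl a (h ▸ hadjz)
    have hzb : zf j ≠ b := fun h => hRab.2 (h ▸ hadjz)
    have hzd : zf j ≠ d := fun h => hRad.2 (h ▸ hadjz)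
    have hzM : zf j ∈ M := (hmemM _).mpr (hz1 j)
    have hznot : zf j ∉ M.filter (R b) := by
      rw [← hEq]
      simp [hza, hzd]
    have hAdjbz : G.Adj b (zf j) := by
      by_contra hA
      exact hznot (Finset.mem_filter.mpr ⟨hzM, fun h => hzb h.symm, hA⟩)
    have hbx : b ≠ x := fun h => hxM (h ▸ hbM)
    have hba : b ≠ a := fun h => hRab.1 h.symm
    have hzx : zf j ≠ x := fun h => hxM (h ▸ hzM)
    exact hc b (zf j) hbx hba hzx hza hAdjbz (by rw [hz3 j, hj])
  -- find a 4-clique inside M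
  obtain ⟨a, haM, b, hbM, c', hcM, d, hdM, hab, hac, had, hbc, hbd, hcd,
    hRab, hRac, hRad, hRbc, hRbd, hRcd⟩ := my_quad R hsym M hdeg htri (by omega)
  set Q : Finset V := {a, b, c', d} with hQ
  have haQ : a ∈ Q := by simp [hQ]
  have hbQ : b ∈ Q := by simp [hQ]
  have hcQ : c' ∈ Q := by simp [hQ]
  have hdQ : d ∈ Q := by simp [hQ]
  have hQM : Q ⊆ M := by
    intro u hu
    rw [hQ] at hu
    simp only [Finset.mem_insert, Finset.mem_singleton] at hu
    rcases hu with rfl | rfl | rfl | rfl <;> assumption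
  have hQcard : Q.card = 4 := by
    rw [hQ, Finset.card_insert_of_notMem (by simp [hab, hac, had]),
      Finset.card_insert_of_notMem (by simp [hbc, hbd]),
      Finset.card_insert_of_notMem (by simp [hcd]), Finset.card_singleton]
  obtain ⟨z, hzW, hzcard⟩ := my_fifth R hsym M Q hQM hdeg hM9 hQcard
  have hzM : z ∈ M := (Finset.mem_sdiff.mp hzW).1
  have hzQ : z ∉ Q := (Finset.mem_sdiff.mp hzW).2
  have hza : z ≠ a := fun h => hzQ (h ▸ haQ)
  have hzb : z ≠ b := fun h => hzQ (h ▸ hbQ)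
  have hzc : z ≠ c' := fun h => hzQ (h ▸ hcQ)
  have hzd : z ≠ d := fun h => hzQ (h ▸ hdQ)
  have hone : ∀ u v : V, u ∈ Q → v ∈ Q → u ≠ v → R z u → R z v → False := by
    intro u v hu hv huv h1 h2
    have hsub : ({u, v} : Finset V) ⊆ Q.filter (R z) := by
      intro w hw
      rcases Finset.mem_insert.mp hw with rfl | hw
      · exact Finset.mem_filter.mpr ⟨hu, h1⟩
      · rw [Finset.mem_singleton] at hw
        subst hw
        exact Finset.mem_filter.mpr ⟨hv, h2⟩
    have h2c : 2 ≤ (Q.filter (R z)).card := by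
      calc 2 = ({u, v} : Finset V).card := by
            rw [Finset.card_insert_of_notMem (by simp [huv]), Finset.card_singleton]
      _ ≤ _ := Finset.card_le_card hsub
    omega
  -- adjacency facts
  have hxadj : ∀ u, u ∈ M → G.Adj x u := fun u hu => (hmemM u).mp hu
  have hAxz := hxadj z hzM
  have hAxa := hxadj a (hQM haQ)
  have hAxb := hxadj b (hQM hbQ)
  have hAxc := hxadj c' (hQM hcQ)
  have hAxd := hxadj d (hQM hdQ)
  have hAab : G.Adj a b := hAdjOf a b hab hRab
  have hAac : G.Adj a c' := hAdjOf a c' hac hRac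
  have hAad : G.Adj a d := hAdjOf a d had hRad
  have hAbc : G.Adj b c' := hAdjOf b c' hbc hRbc
  have hAbd : G.Adj b d := hAdjOf b d hbd hRbd
  have hAcd : G.Adj c' d := hAdjOf c' d hcd hRcd
  by_cases hzRa : R z a
  · have hnb : ¬ R z b := fun h => hone a b haQ hbQ hab hzRa h
    have hnc : ¬ R z c' := fun h => hone a c' haQ hcQ hac hzRa h
    have hnd : ¬ R z d := fun h => hone a d haQ hdQ had hzRa h
    exact my_assemble G hza hAxz hAxa hAxb hAxc hAxd
      (hAdjOf z b hzb hnb) (hAdjOf z c' hzc hnc) (hAdjOf z d hzd hnd)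
      hAab hAac hAad hAbc hAbd hAcd
  · by_cases hzRb : R z b
    · have hnc : ¬ R z c' := fun h => hone b c' hbQ hcQ hbc hzRb h
      have hnd : ¬ R z d := fun h => hone b d hbQ hdQ hbd hzRb h
      exact my_assemble G hzb hAxz hAxb hAxa hAxc hAxd
        (hAdjOf z a hza hzRa) (hAdjOf z c' hzc hnc) (hAdjOf z d hzd hnd)
        hAab.symm hAbc hAbd hAac hAad hAcd
    · by_cases hzRc : R z c'
      · have hnd : ¬ R z d := fun h => hone c' d hcQ hdQ hcd hzRc h
        exact my_assemble G hzc hAxz hAxc hAxa hAxb hAxd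
          (hAdjOf z a hza hzRa) (hAdjOf z b hzb hzRb) (hAdjOf z d hzd hnd)
          hAac.symm hAbc.symm hAcd hAab hAad hAbd
      · by_cases hzRd : R z d
        · exact my_assemble G hzd hAxz hAxd hAxa hAxb hAxc
            (hAdjOf z a hza hzRa) (hAdjOf z b hzb hzRb) (hAdjOf z c' hzc hzRc)
            hAad.symm hAbd.symm hAcd.symm hAab hAac hAbc
        · exact my_assemble G hza hAxz hAxa hAxb hAxc hAxd
            (hAdjOf z b hzb hzRb) (hAdjOf z c' hzc hzRc) (hAdjOf z d hzd hzRd)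
            hAab hAac hAad hAbc hAbd hAcd
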